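/- For m ∈ ℕ define a_m = Σ (1 + j3)(1 + j4)·x1^{j1} x2^{j2} x3^{j3} x4^{j4}, the sum being over all (j0, j1, j2, j3, j4) ∈ ℕ⁵ with j0 + j1 + 2j2 + j3 + j4 = m and j0 ≥ j3. Then in R[[t]] one has (Σ_{m=0}^∞ a_m t^m) · (1 − t)(1 − t·x1)(1 − t²·x2)(1 − t²·x3)²(1 − t·x4)² = 1. -/

import Mathlib

open scoped BigOperators

open Finset PowerSeries

local notation "Xv" => MvPolynomial.X

noncomputable section StmtAux

abbrev Rq : Type := MvPolynomial (Fin 4) ℚ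

/-- Auxiliary geometric-type series. -/
def G0 : PowerSeries Rq := PowerSeries.mk fun _ => 1
def G1 : PowerSeries Rq := PowerSeries.mk fun n => (Xv 0 : Rq)^n
def G2 : PowerSeries Rq := PowerSeries.mk fun n => if 2 ∣ n then (Xv 1 : Rq)^(n/2) else 0
def G3 : PowerSeries Rq := PowerSeries.mk fun n => if 2 ∣ n then (Xv 2 : Rq)^(n/2) else 0
def G4 : PowerSeries Rq := PowerSeries.mk fun n => (Xv 3 : Rq)^n
def H3 : PowerSeries Rq :=
  PowerSeries.mk fun n => if 2 ∣ n then ((n/2+1 : ℕ) : Rq) * (Xv 2 : Rq)^(n/2) else 0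
def H4 : PowerSeries Rq := PowerSeries.mk fun n => ((n+1 : ℕ) : Rq) * (Xv 3 : Rq)^n

lemma sum_if_even {M : Type*} [AddCommMonoid M] (n : ℕ) (f : ℕ → M) :
    ∑ i ∈ range (n+1), (if 2 ∣ i then f i else 0) = ∑ j ∈ range (n/2+1), f (2*j) := by
  induction n with
  | zero => simp
  | succ n ih =>
    rw [Finset.sum_range_succ, ih]
    by_cases h : 2 ∣ (n+1)
    · rw [if_pos h, show (n+1)/2 = n/2 + 1 by omega]
      conv_rhs => rw [Finset.sum_range_succ]
      rw [show 2*(n/2+1) = n+1 by omega]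
    · rw [if_neg h, add_zero, show (n+1)/2 = n/2 by omega]

lemma geom_inv {R : Type*} [CommRing R] (a : R) (k : ℕ) (hk : 0 < k) :
    (PowerSeries.mk fun n => if k ∣ n then a^(n/k) else (0:R)) *
      (1 - PowerSeries.C a * PowerSeries.X ^ k) = 1 := by
  ext n
  rw [mul_sub, mul_one, map_sub, mul_left_comm, coeff_C_mul, coeff_mul_X_pow',
    coeff_mk, PowerSeries.coeff_one]
  by_cases hn : k ≤ n
  · rw [if_pos hn, coeff_mk]
    have hn0 : n ≠ 0 := by omega
    rw [if_neg hn0]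
    by_cases hd : k ∣ n
    · have hd' : k ∣ n - k := (Nat.dvd_sub hd dvd_rfl)
      rw [if_pos hd, if_pos hd']
      have h1 : (n-k)/k + 1 = n/k := by
        rcases hd with ⟨c, rfl⟩
        have hc : 1 ≤ c := by nlinarith
        rw [← Nat.mul_pred, Nat.mul_div_cancel_left _ hk, Nat.mul_div_cancel_left _ hk]
        exact Nat.succ_pred_eq_of_pos hc
      rw [← h1, pow_succ]
      ring
    · have hd' : ¬ k ∣ n - k := fun h => hd (by
        have : n = (n - k) + k := by omega
        rw [this]; exact Nat.dvd_add h dvd_rfl)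
      rw [if_neg hd, if_neg hd']
      ring
  · rw [if_neg hn, mul_zero, sub_zero]
    by_cases h0 : n = 0
    · subst h0; simp
    · rw [if_neg (fun hd => h0 (Nat.eq_zero_of_dvd_of_lt hd (by omega))), if_neg h0]

lemma L0 : G0 * (1 - PowerSeries.X) = 1 := by
  have := geom_inv (1 : Rq) 1 one_pos
  simpa [G0] using this

lemma L1 : G1 * (1 - PowerSeries.C (R := Rq) (Xv 0) * PowerSeries.X) = 1 := by
  have := geom_inv (Xv 0 : Rq) 1 one_pos
  simpa [G1] using this

lemma L2 : G2 * (1 - PowerSeries.C (R := Rq) (Xv 1) * PowerSeries.X ^ 2) = 1 := by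
  have := geom_inv (Xv 1 : Rq) 2 two_pos
  simpa [G2] using this

lemma L3 : G3 * (1 - PowerSeries.C (R := Rq) (Xv 2) * PowerSeries.X ^ 2) = 1 := by
  have := geom_inv (Xv 2 : Rq) 2 two_pos
  simpa [G3] using this

lemma L4 : G4 * (1 - PowerSeries.C (R := Rq) (Xv 3) * PowerSeries.X) = 1 := by
  have := geom_inv (Xv 3 : Rq) 1 one_pos
  simpa [G4] using this

lemma H4_eq : G4 * G4 = H4 := by
  apply PowerSeries.ext; intro n
  rw [PowerSeries.coeff_mul, Finset.Nat.sum_antidiagonal_eq_sum_range_succ_mk]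
  simp only [G4, H4, coeff_mk]
  calc ∑ i ∈ range (n+1), (Xv 3 : Rq)^i * (Xv 3 : Rq)^(n-i)
      = ∑ i ∈ range (n+1), (Xv 3 : Rq)^n := by
        refine Finset.sum_congr rfl fun i hi => ?_
        rw [← pow_add]
        congr 1
        have := Finset.mem_range.mp hi; omega
    _ = ((n+1 : ℕ) : Rq) * (Xv 3 : Rq)^n := by
        rw [Finset.sum_const, Finset.card_range, nsmul_eq_mul]

lemma H3_eq : G3 * G3 = H3 := by
  apply PowerSeries.ext; intro n
  rw [PowerSeries.coeff_mul, Finset.Nat.sum_antidiagonal_eq_sum_range_succ_mk]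
  simp only [G3, H3, coeff_mk, ite_mul, zero_mul]
  rw [sum_if_even n (fun i => (Xv 2 : Rq)^(i/2) * (if 2 ∣ n - i then (Xv 2:Rq)^((n-i)/2) else 0))]
  by_cases h : 2 ∣ n
  · rw [if_pos h]
    calc ∑ j ∈ range (n/2+1), (Xv 2:Rq)^((2*j)/2) * (if 2 ∣ n - 2*j then (Xv 2:Rq)^((n-2*j)/2) else 0)
        = ∑ j ∈ range (n/2+1), (Xv 2 : Rq)^(n/2) := by
          refine Finset.sum_congr rfl fun j hj => ?_
          have hj' := Finset.mem_range.mp hj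
          rw [if_pos (by omega : 2 ∣ n - 2*j), ← pow_add]
          congr 1; omega
      _ = ((n/2+1 : ℕ) : Rq) * (Xv 2 : Rq)^(n/2) := by
          rw [Finset.sum_const, Finset.card_range, nsmul_eq_mul]
  · rw [if_neg h]
    refine Finset.sum_eq_zero fun j hj => ?_
    have hj' := Finset.mem_range.mp hj
    rw [if_neg (by omega : ¬ 2 ∣ n - 2*j), mul_zero]

lemma cH34 (r : ℕ) : (PowerSeries.coeff (R := Rq) r) (H3 * H4) =
    ∑ j3 ∈ range (r/2+1),
      (((j3+1)*(r-2*j3+1) : ℕ) : Rq) * (Xv 2 : Rq)^j3 * (Xv 3 : Rq)^(r-2*j3) := by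
  rw [PowerSeries.coeff_mul, Finset.Nat.sum_antidiagonal_eq_sum_range_succ_mk]
  simp only [H3, H4, coeff_mk, ite_mul, zero_mul]
  rw [sum_if_even r]
  refine Finset.sum_congr rfl fun j hj => ?_
  rw [show 2*j/2 = j by omega]
  push_cast
  ring

lemma cG2 (s : ℕ) : (PowerSeries.coeff (R := Rq) s) (G2 * (H3 * H4)) =
    ∑ j2 ∈ range (s/2+1), ∑ j3 ∈ range ((s-2*j2)/2+1),
      (Xv 1 : Rq)^j2 * ((((j3+1)*(s-2*j2-2*j3+1)) : ℕ) : Rq) *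
        (Xv 2 : Rq)^j3 * (Xv 3 : Rq)^(s-2*j2-2*j3) := by
  rw [PowerSeries.coeff_mul, Finset.Nat.sum_antidiagonal_eq_sum_range_succ_mk]
  simp only [G2, coeff_mk, ite_mul, zero_mul]
  rw [sum_if_even s]
  refine Finset.sum_congr rfl fun j2 hj2 => ?_
  rw [show 2*j2/2 = j2 by omega, cH34 (s - 2*j2), Finset.mul_sum]
  refine Finset.sum_congr rfl fun j3 hj3 => ?_
  ring

lemma cG1 (u : ℕ) : (PowerSeries.coeff (R := Rq) u) (G1 * (G2 * (H3 * H4))) =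
    ∑ j1 ∈ range (u+1), ∑ j2 ∈ range ((u-j1)/2+1), ∑ j3 ∈ range ((u-j1-2*j2)/2+1),
      (Xv 0 : Rq)^j1 * (Xv 1 : Rq)^j2 * ((((j3+1)*(u-j1-2*j2-2*j3+1)) : ℕ) : Rq) *
        (Xv 2 : Rq)^j3 * (Xv 3 : Rq)^(u-j1-2*j2-2*j3) := by
  rw [PowerSeries.coeff_mul, Finset.Nat.sum_antidiagonal_eq_sum_range_succ_mk]
  simp only [G1, coeff_mk]
  refine Finset.sum_congr rfl fun j1 hj1 => ?_
  rw [cG2 (u - j1), Finset.mul_sum]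
  refine Finset.sum_congr rfl fun j2 hj2 => ?_
  rw [Finset.mul_sum]
  refine Finset.sum_congr rfl fun j3 hj3 => ?_
  ring

lemma cP (m : ℕ) : (PowerSeries.coeff (R := Rq) m) (G0 * (G1 * (G2 * (H3 * H4)))) =
    ∑ i0 ∈ range (m+1), ∑ j1 ∈ range (m-i0+1), ∑ j2 ∈ range ((m-i0-j1)/2+1),
      ∑ j3 ∈ range ((m-i0-j1-2*j2)/2+1),
      (Xv 0 : Rq)^j1 * (Xv 1 : Rq)^j2 *
        ((((j3+1)*(m-i0-j1-2*j2-2*j3+1)) : ℕ) : Rq) *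
        (Xv 2 : Rq)^j3 * (Xv 3 : Rq)^(m-i0-j1-2*j2-2*j3) := by
  rw [PowerSeries.coeff_mul, Finset.Nat.sum_antidiagonal_eq_sum_range_succ_mk]
  simp only [G0, coeff_mk, one_mul]
  refine Finset.sum_congr rfl fun i0 hi0 => ?_
  rw [cG1 (m - i0)]

lemma shrink {M : Type*} [AddCommMonoid M] {N B : ℕ} (h : B + 1 ≤ N) (f : ℕ → M)
    (hv : ∀ i, B < i → f i = 0) :
    ∑ i ∈ range N, f i = ∑ i ∈ range (B+1), f i :=
  (Finset.sum_subset (Finset.range_subset_range.mpr h)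
    (fun i hi hni => hv i (by simp only [Finset.mem_range] at hni; omega))).symm

lemma Bnested (m : ℕ) :
    ∑ p ∈ ((range (m+1)) ×ˢ (range (m+1)) ×ˢ (range (m+1)) ×ˢ (range (m+1))).filter
        (fun p : ℕ × ℕ × ℕ × ℕ => p.1 + p.2.1 + 2*p.2.2.1 + 2*p.2.2.2 ≤ m),
      (Xv 0 : Rq)^p.2.1 * (Xv 1 : Rq)^p.2.2.1 *
        (((p.2.2.2+1)*(m - p.1 - p.2.1 - 2*p.2.2.1 - 2*p.2.2.2 + 1) : ℕ) : Rq) *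
        (Xv 2 : Rq)^p.2.2.2 * (Xv 3 : Rq)^(m - p.1 - p.2.1 - 2*p.2.2.1 - 2*p.2.2.2)
    = ∑ i0 ∈ range (m+1), ∑ j1 ∈ range (m-i0+1), ∑ j2 ∈ range ((m-i0-j1)/2+1),
        ∑ j3 ∈ range ((m-i0-j1-2*j2)/2+1),
        (Xv 0 : Rq)^j1 * (Xv 1 : Rq)^j2 *
          ((((j3+1)*(m-i0-j1-2*j2-2*j3+1)) : ℕ) : Rq) *
          (Xv 2 : Rq)^j3 * (Xv 3 : Rq)^(m-i0-j1-2*j2-2*j3) := by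
  rw [Finset.sum_filter]
  simp only [Finset.sum_product]
  refine Finset.sum_congr rfl fun i0 hi0 => ?_
  have hi0' : i0 ≤ m := by have := Finset.mem_range.mp hi0; omega
  refine ((shrink (B := m - i0) (by omega) _ ?_).trans ?_)
  · intro j1 h1
    refine Finset.sum_eq_zero fun j2 _ => Finset.sum_eq_zero fun j3 _ => if_neg (by omega)
  refine Finset.sum_congr rfl fun j1 hj1 => ?_
  have hj1' : j1 ≤ m - i0 := by have := Finset.mem_range.mp hj1; omega
  refine ((shrink (B := (m-i0-j1)/2) (by omega) _ ?_).trans ?_)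
  · intro j2 h2
    refine Finset.sum_eq_zero fun j3 _ => if_neg (by omega)
  refine Finset.sum_congr rfl fun j2 hj2 => ?_
  have hj2' : j2 ≤ (m-i0-j1)/2 := by have := Finset.mem_range.mp hj2; omega
  refine ((shrink (B := (m-i0-j1-2*j2)/2) (by omega) _ ?_).trans ?_)
  · intro j3 h3
    exact if_neg (by omega)
  refine Finset.sum_congr rfl fun j3 hj3 => ?_
  have hj3' : j3 ≤ (m-i0-j1-2*j2)/2 := by have := Finset.mem_range.mp hj3; omega
  rw [if_pos (by omega)]

lemma aB (m : ℕ) :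
    ∑ j ∈ (Finset.range (m + 1) ×ˢ Finset.range (m + 1) ×ˢ Finset.range (m + 1) ×ˢ
          Finset.range (m + 1) ×ˢ Finset.range (m + 1)).filter
        (fun j => j.1 + j.2.1 + 2 * j.2.2.1 + j.2.2.2.1 + j.2.2.2.2 = m ∧ j.2.2.2.1 ≤ j.1),
      (((1 + j.2.2.2.1) * (1 + j.2.2.2.2) : ℕ) : Rq) *
        Xv 0 ^ j.2.1 * Xv 1 ^ j.2.2.1 * Xv 2 ^ j.2.2.2.1 * Xv 3 ^ j.2.2.2.2
    = ∑ p ∈ ((range (m+1)) ×ˢ (range (m+1)) ×ˢ (range (m+1)) ×ˢ (range (m+1))).filter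
        (fun p : ℕ × ℕ × ℕ × ℕ => p.1 + p.2.1 + 2*p.2.2.1 + 2*p.2.2.2 ≤ m),
      (Xv 0 : Rq)^p.2.1 * (Xv 1 : Rq)^p.2.2.1 *
        (((p.2.2.2+1)*(m - p.1 - p.2.1 - 2*p.2.2.1 - 2*p.2.2.2 + 1) : ℕ) : Rq) *
        (Xv 2 : Rq)^p.2.2.2 * (Xv 3 : Rq)^(m - p.1 - p.2.1 - 2*p.2.2.1 - 2*p.2.2.2) := by
  refine Finset.sum_nbij'
    (fun j => (j.1 - j.2.2.2.1, j.2.1, j.2.2.1, j.2.2.2.1))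
    (fun p => (p.1 + p.2.2.2, p.2.1, p.2.2.1, p.2.2.2,
      m - p.1 - p.2.1 - 2*p.2.2.1 - 2*p.2.2.2)) ?_ ?_ ?_ ?_ ?_
  · rintro ⟨j0,j1,j2,j3,j4⟩ hj
    simp only [Finset.mem_filter, Finset.mem_product, Finset.mem_range] at hj ⊢
    omega
  · rintro ⟨p0,p1,p2,p3⟩ hp
    simp only [Finset.mem_filter, Finset.mem_product, Finset.mem_range] at hp ⊢
    omega
  · rintro ⟨j0,j1,j2,j3,j4⟩ hj
    simp only [Finset.mem_filter, Finset.mem_product, Finset.mem_range] at hj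
    simp only [Prod.mk.injEq, true_and, and_true]
    omega
  · rintro ⟨p0,p1,p2,p3⟩ hp
    simp only [Finset.mem_filter, Finset.mem_product, Finset.mem_range] at hp
    simp only [Prod.mk.injEq, true_and, and_true]
    omega
  · rintro ⟨j0,j1,j2,j3,j4⟩ hj
    simp only [Finset.mem_filter, Finset.mem_product, Finset.mem_range] at hj
    have e1 : m - (j0 - j3) - j1 - 2*j2 - 2*j3 = j4 := by omega
    simp only [e1]
    push_cast
    ring

end StmtAux

/-- Over `R = ℚ[x1,x2,x3,x4]`, with
`a_m = ∑ (1+j3)(1+j4)·x1^j1 x2^j2 x3^j3 x4^j4`, summed over `(j0,…,j4) ∈ ℕ⁵` with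
`j0+j1+2j2+j3+j4 = m` and `j0 ≥ j3`, we have
`(∑_m a_m t^m)·(1-t)(1-t·x1)(1-t²·x2)(1-t²·x3)²(1-t·x4)² = 1` in `R[[t]]`. -/
theorem stmt_3 :
    (PowerSeries.mk (fun m : ℕ =>
      ∑ j ∈ (Finset.range (m + 1) ×ˢ Finset.range (m + 1) ×ˢ Finset.range (m + 1) ×ˢ
            Finset.range (m + 1) ×ˢ Finset.range (m + 1)).filter
          (fun j => j.1 + j.2.1 + 2 * j.2.2.1 + j.2.2.2.1 + j.2.2.2.2 = m ∧ j.2.2.2.1 ≤ j.1),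
        (((1 + j.2.2.2.1) * (1 + j.2.2.2.2) : ℕ) : MvPolynomial (Fin 4) ℚ) *
          MvPolynomial.X 0 ^ j.2.1 * MvPolynomial.X 1 ^ j.2.2.1 *
          MvPolynomial.X 2 ^ j.2.2.2.1 * MvPolynomial.X 3 ^ j.2.2.2.2)) *
      ((1 - PowerSeries.X) *
        (1 - PowerSeries.C (R := MvPolynomial (Fin 4) ℚ) (MvPolynomial.X 0) * PowerSeries.X) *
        (1 - PowerSeries.C (R := MvPolynomial (Fin 4) ℚ) (MvPolynomial.X 1) * PowerSeries.X ^ 2) *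
        (1 - PowerSeries.C (R := MvPolynomial (Fin 4) ℚ) (MvPolynomial.X 2) * PowerSeries.X ^ 2) ^ 2 *
        (1 - PowerSeries.C (R := MvPolynomial (Fin 4) ℚ) (MvPolynomial.X 3) * PowerSeries.X) ^ 2) =
      1 := by
  have key : (PowerSeries.mk (fun m : ℕ =>
      ∑ j ∈ (Finset.range (m + 1) ×ˢ Finset.range (m + 1) ×ˢ Finset.range (m + 1) ×ˢ
            Finset.range (m + 1) ×ˢ Finset.range (m + 1)).filter
          (fun j => j.1 + j.2.1 + 2 * j.2.2.1 + j.2.2.2.1 + j.2.2.2.2 = m ∧ j.2.2.2.1 ≤ j.1),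
        (((1 + j.2.2.2.1) * (1 + j.2.2.2.2) : ℕ) : MvPolynomial (Fin 4) ℚ) *
          MvPolynomial.X 0 ^ j.2.1 * MvPolynomial.X 1 ^ j.2.2.1 *
          MvPolynomial.X 2 ^ j.2.2.2.1 * MvPolynomial.X 3 ^ j.2.2.2.2))
      = G0 * (G1 * (G2 * (H3 * H4))) := by
    apply PowerSeries.ext; intro m
    rw [PowerSeries.coeff_mk, cP m, aB m, Bnested m]
  rw [key, ← H3_eq, ← H4_eq]
  have assoc :
      (G0 * (G1 * (G2 * (G3 * G3 * (G4 * G4))))) *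
        ((1 - PowerSeries.X) *
          (1 - PowerSeries.C (R := Rq) (Xv 0) * PowerSeries.X) *
          (1 - PowerSeries.C (R := Rq) (Xv 1) * PowerSeries.X ^ 2) *
          (1 - PowerSeries.C (R := Rq) (Xv 2) * PowerSeries.X ^ 2) ^ 2 *
          (1 - PowerSeries.C (R := Rq) (Xv 3) * PowerSeries.X) ^ 2)
      = (G0 * (1 - PowerSeries.X)) *
        ((G1 * (1 - PowerSeries.C (R := Rq) (Xv 0) * PowerSeries.X)) *
        ((G2 * (1 - PowerSeries.C (R := Rq) (Xv 1) * PowerSeries.X ^ 2)) *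
        ((G3 * (1 - PowerSeries.C (R := Rq) (Xv 2) * PowerSeries.X ^ 2)) *
         (G3 * (1 - PowerSeries.C (R := Rq) (Xv 2) * PowerSeries.X ^ 2)) *
        ((G4 * (1 - PowerSeries.C (R := Rq) (Xv 3) * PowerSeries.X)) *
         (G4 * (1 - PowerSeries.C (R := Rq) (Xv 3) * PowerSeries.X)))))) := by
    ring
  rw [assoc, L0, L1, L2, L3, L4]
  simp
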